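/- Let ζ : ℝ → ℝ be a continuous even function with compact support contained in [−R, R] (R > 0), bounded by M := sup_ℝ |ζ|, satisfying the moment conditions of order 2: for every y ∈ ℝ, ∑_{ξ∈ℤ} ζ(ξ − y)(ξ − y)^j equals 1 if j = 0 and equals 0 if j = 1, 2. Let a < b, let f : ℝ → ℝ be three times continuously differentiable, and let v : ℝ → ℝ be continuously differentiable with v(x₀) = 0 for some x₀ ∈ [a, b]. Then |∫_a^b v(x)·(f(x) − ∑_{ξ∈ℤ} ζ(x − ξ) f(ξ)) dx| ≤ C · (b − a)^{3/2} · sup_{y ∈ [a−R, b+R]} |f‴(y)| · (∫_a^b |v′(x)|² dx)^{1/2}, where C depends only on R and M. -/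

import Mathlib

open MeasureTheory Set


lemma aux_taylor (R B : ℝ) (hR : 0 < R) (f : ℝ → ℝ) (hf : ContDiff ℝ 3 f) (x : ℝ)
    (hB : ∀ t ∈ Set.Icc (x-R) (x+R), |deriv (deriv (deriv f)) t| ≤ B) :
    ∀ ξ ∈ Set.Icc (x-R) (x+R),
      |f ξ - (f x + deriv f x * (ξ - x) + deriv (deriv f) x / 2 * (ξ - x)^2)| ≤ B * R^3 := by
  intro ξ hξ
  set g1 := deriv f with hg1
  set g2 := deriv g1 with hg2
  have hd0 : Differentiable ℝ f := hf.differentiable (by norm_num)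
  have hf1 : ContDiff ℝ 2 g1 := (contDiff_succ_iff_deriv.mp
    (show ContDiff ℝ (2+1) f by norm_num; exact hf)).2.2
  have hd1 : Differentiable ℝ g1 := hf1.differentiable (by norm_num)
  have hf2 : ContDiff ℝ 1 g2 := (contDiff_succ_iff_deriv.mp
    (show ContDiff ℝ (1+1) g1 by norm_num; exact hf1)).2.2
  have hd2 : Differentiable ℝ g2 := hf2.differentiable (by norm_num)
  set J := Set.Icc (x-R) (x+R) with hJ
  have hxJ : x ∈ J := ⟨by linarith, by linarith⟩
  have hB0 : 0 ≤ B := le_trans (abs_nonneg _) (hB x hxJ)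
  have hdist : ∀ t ∈ J, ‖t - x‖ ≤ R := by
    intro t ht
    rw [Real.norm_eq_abs, abs_le]
    constructor <;> [linarith [ht.1]; linarith [ht.2]]
  -- step A
  have hA : ∀ t ∈ J, ‖g2 t - g2 x‖ ≤ B * R := by
    intro t ht
    calc ‖g2 t - g2 x‖ ≤ B * ‖t - x‖ :=
          (convex_Icc _ _).norm_image_sub_le_of_norm_deriv_le
            (fun s _ => hd2 s) (fun s hs => hB s hs) hxJ ht
      _ ≤ B * R := mul_le_mul_of_nonneg_left (hdist t ht) hB0
  -- step B
  set u1 : ℝ → ℝ := fun t => g1 t - (g1 x + g2 x * (t - x)) with hu1def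
  have hu1 : ∀ t : ℝ, HasDerivAt u1 (g2 t - g2 x) t := by
    intro t
    have h1 : HasDerivAt g1 (g2 t) t := (hd1 t).hasDerivAt
    have h2 : HasDerivAt (fun t => g1 x + g2 x * (t - x)) (g2 x * 1) t :=
      (((hasDerivAt_id t).sub_const x).const_mul (g2 x)).const_add (g1 x)
    exact (h1.sub h2).congr_deriv (by ring)
  have hBstep : ∀ t ∈ J, ‖u1 t‖ ≤ B * R * R := by
    intro t ht
    have h0 : u1 x = 0 := by simp [hu1def]
    calc ‖u1 t‖ = ‖u1 t - u1 x‖ := by rw [h0, sub_zero]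
      _ ≤ B * R * ‖t - x‖ :=
          (convex_Icc _ _).norm_image_sub_le_of_norm_hasDerivWithin_le
            (fun s hs => (hu1 s).hasDerivWithinAt) hA hxJ ht
      _ ≤ B * R * R := mul_le_mul_of_nonneg_left (hdist t ht) (by positivity)
  -- step C
  set h : ℝ → ℝ := fun t => f t - (f x + g1 x * (t - x) + g2 x / 2 * (t - x)^2) with hhdef
  have hh : ∀ t : ℝ, HasDerivAt h (u1 t) t := by
    intro t
    have h1 : HasDerivAt f (g1 t) t := (hd0 t).hasDerivAt
    have h2 : HasDerivAt (fun t => f x + g1 x * (t - x) + g2 x / 2 * (t - x)^2)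
        (g1 x * 1 + g2 x / 2 * (2 * (t - x)^1 * 1)) t := by
      exact ((((hasDerivAt_id t).sub_const x).const_mul (g1 x)).const_add (f x)).add
        ((((hasDerivAt_id t).sub_const x).pow 2).const_mul (g2 x / 2))
    exact (h1.sub h2).congr_deriv (by show _ = g1 t - (g1 x + g2 x * (t - x)); ring)
  have h0 : h x = 0 := by simp [hhdef]
  calc |f ξ - (f x + g1 x * (ξ - x) + g2 x / 2 * (ξ - x)^2)| = ‖h ξ - h x‖ := by
        rw [h0, sub_zero]; rfl
    _ ≤ B * R * R * ‖ξ - x‖ :=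
        (convex_Icc _ _).norm_image_sub_le_of_norm_hasDerivWithin_le
          (fun s hs => (hh s).hasDerivWithinAt) hBstep hxJ hξ
    _ ≤ B * R * R * R := mul_le_mul_of_nonneg_left (hdist ξ hξ) (by positivity)
    _ = B * R^3 := by ring


lemma aux_poincare (a b : ℝ) (hab : a < b) (v : ℝ → ℝ) (hv : ContDiff ℝ 1 v)
    (x₀ : ℝ) (hx₀ : x₀ ∈ Set.Icc a b) (hv0 : v x₀ = 0) :
    ∀ x ∈ Set.Icc a b,
      |v x| ≤ Real.sqrt (b - a) * Real.sqrt (∫ x in a..b, |deriv v x| ^ 2) := by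
  have hdv : Continuous (deriv v) := hv.continuous_deriv le_rfl
  have hdva : Continuous fun t => |deriv v t| := hdv.abs
  intro x hx
  have hftc : v x - v x₀ = ∫ t in x₀..x, deriv v t := by
    rw [intervalIntegral.integral_deriv_eq_sub
      (fun t _ => (hv.differentiable (by norm_num)) t) (hdv.intervalIntegrable _ _)]
  have h1 : |v x| ≤ ∫ t in a..b, |deriv v t| := by
    have h2 : |v x| = ‖∫ t in x₀..x, deriv v t‖ := by
      rw [← hftc]; rw [hv0]; simp
    rw [h2]
    calc ‖∫ t in x₀..x, deriv v t‖ ≤ |∫ t in x₀..x, ‖deriv v t‖| :=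
          intervalIntegral.norm_integral_le_abs_integral_norm
      _ ≤ |∫ t in a..b, ‖deriv v t‖| := by
          apply intervalIntegral.abs_integral_mono_interval
          · apply Set.uIoc_subset_uIoc_of_uIcc_subset_uIcc
            rw [Set.uIcc_of_le hab.le]
            exact Set.uIcc_subset_Icc hx₀ hx
          · filter_upwards with t using norm_nonneg _
          · exact (hdv.norm.intervalIntegrable _ _)
      _ = ∫ t in a..b, |deriv v t| := by
          rw [abs_of_nonneg (intervalIntegral.integral_nonneg hab.le
            (fun t _ => norm_nonneg _))]
          simp [Real.norm_eq_abs]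
  -- Cauchy-Schwarz
  set μ := volume.restrict (Set.Ioc a b) with hμ
  haveI : IsFiniteMeasure μ := by
    constructor
    rw [hμ, Measure.restrict_apply_univ, Real.volume_Ioc]
    exact ENNReal.ofReal_lt_top
  have hpq : Real.HolderConjugate 2 2 := ⟨by norm_num, by norm_num, by norm_num⟩
  have hmf : MemLp (fun t => |deriv v t|) (ENNReal.ofReal 2) μ := by
    obtain ⟨K, hK⟩ := (isCompact_Icc (a := a) (b := b)).exists_bound_of_continuousOn
      hdva.continuousOn
    apply MemLp.of_bound (hdva.aestronglyMeasurable.restrict) K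
    rw [ae_restrict_iff' measurableSet_Ioc]
    filter_upwards with t ht using hK t ⟨ht.1.le, ht.2⟩
  have hmg : MemLp (fun _ : ℝ => (1:ℝ)) (ENNReal.ofReal 2) μ := memLp_const 1
  have hcs := integral_mul_le_Lp_mul_Lq_of_nonneg hpq
    (f := fun t => |deriv v t|) (g := fun _ => (1:ℝ)) (μ := μ)
    (Filter.Eventually.of_forall fun t => abs_nonneg _)
    (Filter.Eventually.of_forall fun t => zero_le_one) hmf hmg
  simp only [mul_one] at hcs
  have e1 : ∫ t, |deriv v t| ∂μ = ∫ t in a..b, |deriv v t| := by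
    rw [intervalIntegral.integral_of_le hab.le]
  have e2 : ∫ t, |deriv v t| ^ (2:ℝ) ∂μ = ∫ x in a..b, |deriv v x| ^ 2 := by
    rw [intervalIntegral.integral_of_le hab.le]
    apply integral_congr_ae
    filter_upwards with t
    rw [← Real.rpow_natCast (|deriv v t|) 2]
    norm_num
  have e3 : ∫ _t, (1:ℝ) ^ (2:ℝ) ∂μ = b - a := by
    simp only [Real.one_rpow]
    rw [integral_const]
    simp [hμ, Real.volume_Ioc, ENNReal.toReal_ofReal (by linarith : (0:ℝ) ≤ b - a), hab.le]
  rw [e1, e2, e3] at hcs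
  have hhalf : ∀ y : ℝ, y ^ ((1:ℝ)/2) = Real.sqrt y := fun y => (Real.sqrt_eq_rpow y).symm
  rw [hhalf, hhalf] at hcs
  calc |v x| ≤ ∫ t in a..b, |deriv v t| := h1
    _ ≤ Real.sqrt (∫ x in a..b, |deriv v x| ^ 2) * Real.sqrt (b - a) := hcs
    _ = Real.sqrt (b - a) * Real.sqrt (∫ x in a..b, |deriv v x| ^ 2) := mul_comm _ _
lemma aux_err (R M B a b : ℝ) (hR : 0 < R) (hM0 : 0 ≤ M) (ζ : ℝ → ℝ)
    (hζe : ∀ x, ζ (-x) = ζ x) (hζs : ∀ x, x ∉ Set.Icc (-R) R → ζ x = 0)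
    (hζM : ∀ x, |ζ x| ≤ M)
    (hmom : ∀ (y : ℝ) (j : ℕ), j ≤ 2 →
      ∑' ξ : ℤ, ζ ((ξ : ℝ) - y) * ((ξ : ℝ) - y) ^ j = if j = 0 then 1 else 0)
    (f : ℝ → ℝ) (hf : ContDiff ℝ 3 f)
    (hB : ∀ y ∈ Set.Icc (a - R) (b + R), |deriv (deriv (deriv f)) y| ≤ B)
    (x : ℝ) (hx : x ∈ Set.Icc a b) :
    |f x - ∑' ξ : ℤ, ζ (x - (ξ : ℝ)) * f (ξ : ℝ)| ≤ (2*R+1) * M * R^3 * B := by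
  obtain ⟨hax, hxb⟩ := hx
  set T : Finset ℤ := Finset.Icc ⌈x - R⌉ ⌊x + R⌋ with hT
  have hJsub : Set.Icc (x - R) (x + R) ⊆ Set.Icc (a - R) (b + R) := by
    apply Set.Icc_subset_Icc <;> linarith
  have hB' : ∀ t ∈ Set.Icc (x-R) (x+R), |deriv (deriv (deriv f)) t| ≤ B :=
    fun t ht => hB t (hJsub ht)
  have hB0 : 0 ≤ B := le_trans (abs_nonneg _) (hB' x ⟨by linarith, by linarith⟩)
  have hsupp : ∀ ξ : ℤ, ξ ∉ T → ζ (x - (ξ:ℝ)) = 0 := by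
    intro ξ hξ
    apply hζs
    intro hmem
    simp only [hT, Finset.mem_Icc, not_and_or, not_le] at hξ
    obtain ⟨h1, h2⟩ := hmem
    rcases hξ with h | h
    · exact absurd (Int.ceil_le.mpr (by push_cast; linarith)) (not_le.mpr h)
    · exact absurd (Int.le_floor.mpr (by push_cast; linarith)) (not_le.mpr h)
  have hTJ : ∀ ξ : ℤ, ξ ∈ T → ((ξ:ℝ)) ∈ Set.Icc (x - R) (x + R) := by
    intro ξ hξ
    rw [hT, Finset.mem_Icc] at hξ
    constructor
    · calc x - R ≤ (⌈x - R⌉ : ℝ) := Int.le_ceil _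
        _ ≤ (ξ : ℝ) := by exact_mod_cast hξ.1
    · calc (ξ : ℝ) ≤ (⌊x + R⌋ : ℝ) := by exact_mod_cast hξ.2
        _ ≤ x + R := Int.floor_le _
  have hcard : (T.card : ℝ) ≤ 2 * R + 1 := by
    rw [hT, Int.card_Icc]
    rcases le_or_gt (⌊x + R⌋ + 1 - ⌈x - R⌉) 0 with h | h
    · rw [Int.toNat_of_nonpos h]; push_cast; linarith
    · have h1 : ((⌊x + R⌋ + 1 - ⌈x - R⌉).toNat : ℤ) = ⌊x + R⌋ + 1 - ⌈x - R⌉ :=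
        Int.toNat_of_nonneg h.le
      have h2 : ((⌊x + R⌋ + 1 - ⌈x - R⌉).toNat : ℝ) = (⌊x + R⌋ : ℝ) + 1 - (⌈x - R⌉ : ℝ) := by
        exact_mod_cast congrArg (fun z : ℤ => (z : ℝ)) h1
      rw [h2]
      have := Int.floor_le (x + R)
      have := Int.le_ceil (x - R)
      linarith
  -- convert tsum to finite sum
  have htsum : ∑' ξ : ℤ, ζ (x - (ξ:ℝ)) * f (ξ:ℝ) = ∑ ξ ∈ T, ζ (x - (ξ:ℝ)) * f (ξ:ℝ) :=
    tsum_eq_sum (fun ξ hξ => by rw [hsupp ξ hξ, zero_mul])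
  have hζflip : ∀ ξ : ℤ, ζ ((ξ:ℝ) - x) = ζ (x - (ξ:ℝ)) := by
    intro ξ
    rw [show (ξ:ℝ) - x = -(x - (ξ:ℝ)) by ring, hζe]
  have hmomT : ∀ j : ℕ, j ≤ 2 →
      ∑ ξ ∈ T, ζ (x - (ξ:ℝ)) * ((ξ:ℝ) - x) ^ j = if j = 0 then 1 else 0 := by
    intro j hj
    have := hmom x j hj
    rwa [tsum_eq_sum (s := T) (fun ξ hξ => by rw [hζflip ξ, hsupp ξ hξ, zero_mul]),
      Finset.sum_congr rfl (fun ξ _ => by rw [hζflip ξ])] at this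
  set h : ℝ → ℝ := fun t =>
    f t - (f x + deriv f x * (t - x) + deriv (deriv f) x / 2 * (t - x)^2) with hhdef
  have key : ∑ ξ ∈ T, ζ (x - (ξ:ℝ)) * f (ξ:ℝ)
      = (∑ ξ ∈ T, ζ (x - (ξ:ℝ)) * h (ξ:ℝ)) + f x := by
    have expand : ∀ ξ ∈ T, ζ (x - (ξ:ℝ)) * f (ξ:ℝ)
        = ζ (x - (ξ:ℝ)) * h (ξ:ℝ)
          + (f x * (ζ (x - (ξ:ℝ)) * ((ξ:ℝ) - x) ^ 0)
            + deriv f x * (ζ (x - (ξ:ℝ)) * ((ξ:ℝ) - x) ^ 1)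
            + deriv (deriv f) x / 2 * (ζ (x - (ξ:ℝ)) * ((ξ:ℝ) - x) ^ 2)) := by
      intro ξ _
      simp only [hhdef]
      ring
    rw [Finset.sum_congr rfl expand, Finset.sum_add_distrib, Finset.sum_add_distrib,
      Finset.sum_add_distrib, ← Finset.mul_sum, ← Finset.mul_sum, ← Finset.mul_sum,
      hmomT 0 (by norm_num), hmomT 1 (by norm_num), hmomT 2 (by norm_num)]
    norm_num
  have htay := aux_taylor R B hR f hf x hB'
  have hterm : ∀ ξ ∈ T, |ζ (x - (ξ:ℝ)) * h (ξ:ℝ)| ≤ M * (B * R^3) := by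
    intro ξ hξ
    rw [abs_mul]
    exact mul_le_mul (hζM _) (htay _ (hTJ ξ hξ)) (abs_nonneg _) hM0
  calc |f x - ∑' ξ : ℤ, ζ (x - (ξ:ℝ)) * f (ξ:ℝ)|
      = |∑ ξ ∈ T, ζ (x - (ξ:ℝ)) * h (ξ:ℝ)| := by
        rw [htsum, key, show f x - (∑ ξ ∈ T, ζ (x - (ξ:ℝ)) * h (ξ:ℝ) + f x)
          = -(∑ ξ ∈ T, ζ (x - (ξ:ℝ)) * h (ξ:ℝ)) by ring, abs_neg]
    _ ≤ ∑ ξ ∈ T, |ζ (x - (ξ:ℝ)) * h (ξ:ℝ)| := Finset.abs_sum_le_sum_abs _ _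
    _ ≤ T.card • (M * (B * R^3)) := Finset.sum_le_card_nsmul _ _ _ hterm
    _ = (T.card : ℝ) * (M * (B * R^3)) := by rw [nsmul_eq_mul]
    _ ≤ (2*R+1) * (M * (B * R^3)) :=
        mul_le_mul_of_nonneg_right hcard (by positivity)
    _ = (2*R+1) * M * R^3 * B := by ring

/-- Consistency error of the external energy (Lemma 4.3):
the error of the lattice pairing via the quasi-interpolant is controlled
by `(b−a)^{3/2} · sup|f‴| · ‖v′‖_{L²}`, with a constant depending only on
`R` and `M`. -/
theorem stmt_8 (R : ℝ) (hR : 0 < R) (M : ℝ) :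
    ∃ C > 0, ∀ (ζ : ℝ → ℝ), Continuous ζ → (∀ x, ζ (-x) = ζ x) →
      (∀ x, x ∉ Set.Icc (-R) R → ζ x = 0) → (∀ x, |ζ x| ≤ M) →
      (∀ (y : ℝ) (j : ℕ), j ≤ 2 →
        ∑' ξ : ℤ, ζ ((ξ : ℝ) - y) * ((ξ : ℝ) - y) ^ j = if j = 0 then 1 else 0) →
      ∀ (a b : ℝ), a < b → ∀ (f : ℝ → ℝ), ContDiff ℝ 3 f →
      ∀ (v : ℝ → ℝ), ContDiff ℝ 1 v → (∃ x₀ ∈ Set.Icc a b, v x₀ = 0) →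
      ∀ (B : ℝ), (∀ y ∈ Set.Icc (a - R) (b + R), |iteratedDeriv 3 f y| ≤ B) →
      |∫ x in a..b, v x * (f x - ∑' ξ : ℤ, ζ (x - (ξ : ℝ)) * f (ξ : ℝ))|
        ≤ C * (b - a) ^ ((3:ℝ)/2) * B * Real.sqrt (∫ x in a..b, |deriv v x| ^ 2) := by
  refine ⟨(2*R+1)*|M| * R^3 + 1, by positivity, ?_⟩
  intro ζ hζc hζe hζs hζM hmom a b hab f hf v hv hx₀ex B hB
  obtain ⟨x₀, hx₀, hv0⟩ := hx₀ex
  have hM0 : 0 ≤ M := le_trans (abs_nonneg _) (hζM 0)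
  have hMabs : |M| = M := abs_of_nonneg hM0
  have hiter : iteratedDeriv 3 f = deriv (deriv (deriv f)) := by
    rw [show (3:ℕ) = 2+1 from rfl, iteratedDeriv_succ, show (2:ℕ) = 1+1 from rfl,
      iteratedDeriv_succ, iteratedDeriv_one]
  have hB3 : ∀ y ∈ Set.Icc (a-R) (b+R), |deriv (deriv (deriv f)) y| ≤ B := by
    intro y hy; rw [← hiter]; exact hB y hy
  have hB0 : 0 ≤ B := le_trans (abs_nonneg _) (hB3 a ⟨by linarith, by linarith⟩)
  set S := Real.sqrt (∫ x in a..b, |deriv v x| ^ 2) with hS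
  have hS0 : 0 ≤ S := Real.sqrt_nonneg _
  have hpoin := aux_poincare a b hab v hv x₀ hx₀ hv0
  have hbound : ∀ x ∈ Set.uIoc a b,
      ‖v x * (f x - ∑' ξ : ℤ, ζ (x - (ξ:ℝ)) * f (ξ:ℝ))‖
        ≤ (Real.sqrt (b-a) * S) * ((2*R+1)*M*R^3*B) := by
    intro x hx
    rw [Set.uIoc_of_le hab.le] at hx
    have hx' : x ∈ Set.Icc a b := ⟨hx.1.le, hx.2⟩
    rw [Real.norm_eq_abs, abs_mul]
    exact mul_le_mul (hpoin x hx')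
      (aux_err R M B a b hR hM0 ζ hζe hζs hζM hmom f hf hB3 x hx')
      (abs_nonneg _) (by positivity)
  have hmain := intervalIntegral.norm_integral_le_of_norm_le_const hbound
  rw [Real.norm_eq_abs] at hmain
  have hba : 0 ≤ b - a := by linarith
  have hpow : (b-a) ^ ((3:ℝ)/2) = (b-a) * Real.sqrt (b-a) := by
    rw [show (3:ℝ)/2 = 1 + 1/2 by norm_num, Real.rpow_add (by linarith : 0 < b - a),
      Real.rpow_one, ← Real.sqrt_eq_rpow]
  calc |∫ x in a..b, v x * (f x - ∑' ξ : ℤ, ζ (x - (ξ:ℝ)) * f (ξ:ℝ))|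
      ≤ (Real.sqrt (b-a) * S) * ((2*R+1)*M*R^3*B) * |b - a| := hmain
    _ = ((2*R+1)*M*R^3) * ((b-a) * Real.sqrt (b-a)) * B * S := by
        rw [abs_of_nonneg hba]; ring
    _ ≤ ((2*R+1)*|M| * R^3 + 1) * (b-a) ^ ((3:ℝ)/2) * B * S := by
        rw [hpow, hMabs]
        have h1 : 0 ≤ (b-a) * Real.sqrt (b-a) := by positivity
        nlinarith [mul_nonneg (mul_nonneg h1 hB0) hS0]
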